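/- Let Λ = diag(λ, λ^{-1}) ∈ SL(2,C) with λ ≠ ±1, and let M ∈ SL(2,C). Then M_{12}·M_{21} = −g(tr Λ, tr M, tr(ΛM))/((tr Λ)² − 4), where g(x,y,z) = x² + y² + z² − xyz − 4. -/

import Mathlib

/-- The Fricke polynomial g(x,y,z) = x² + y² + z² − xyz − 4. -/
def gP (x y z : ℂ) : ℂ := x ^ 2 + y ^ 2 + z ^ 2 - x * y * z - 4

abbrev SL2 := Matrix.SpecialLinearGroup (Fin 2) ℂ

theorem offdiag_product_formula (lam : ℂ) (hlam0 : lam ≠ 0)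
    (hlam1 : lam ≠ 1) (hlam2 : lam ≠ -1) (M : SL2) :
    (M : Matrix (Fin 2) (Fin 2) ℂ) 0 1 * (M : Matrix (Fin 2) (Fin 2) ℂ) 1 0 =
      -(gP (Matrix.diagonal ![lam, lam⁻¹] : Matrix (Fin 2) (Fin 2) ℂ).trace
          ((M : Matrix (Fin 2) (Fin 2) ℂ).trace)
          ((Matrix.diagonal ![lam, lam⁻¹] * (M : Matrix (Fin 2) (Fin 2) ℂ)).trace)) /
        ((Matrix.diagonal ![lam, lam⁻¹] : Matrix (Fin 2) (Fin 2) ℂ).trace ^ 2 - 4) := by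
  have hdet : (M : Matrix (Fin 2) (Fin 2) ℂ) 0 0 * (M : Matrix (Fin 2) (Fin 2) ℂ) 1 1 -
      (M : Matrix (Fin 2) (Fin 2) ℂ) 0 1 * (M : Matrix (Fin 2) (Fin 2) ℂ) 1 0 = 1 := by
    have := M.2
    rw [Matrix.det_fin_two] at this
    linear_combination this
  have hinv : lam * lam⁻¹ = 1 := mul_inv_cancel₀ hlam0
  have h1 : lam - 1 ≠ 0 := sub_ne_zero.mpr hlam1
  have h2 : lam + 1 ≠ 0 := fun h => hlam2 (by linear_combination h)
  have hsq : lam ^ 2 - 1 ≠ 0 := fun h => (mul_ne_zero h1 h2) (by linear_combination h)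
  have hden : ((Matrix.diagonal ![lam, lam⁻¹] : Matrix (Fin 2) (Fin 2) ℂ).trace ^ 2 - 4) ≠ 0 := by
    simp only [Matrix.trace_fin_two, Matrix.diagonal_apply_eq]
    simp only [Matrix.cons_val_zero, Matrix.cons_val_one, Matrix.head_cons]
    intro h
    apply pow_ne_zero 2 hsq
    have : lam ^ 2 * ((lam + lam⁻¹) ^ 2 - 4) = (lam ^ 2 - 1) ^ 2 := by
      field_simp; ring
    rw [← this, h, mul_zero]
  rw [eq_div_iff hden]
  have hz1 : (Matrix.diagonal ![lam, lam⁻¹] : Matrix (Fin 2) (Fin 2) ℂ) 0 1 = 0 :=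
    Matrix.diagonal_apply_ne _ (by decide)
  have hz2 : (Matrix.diagonal ![lam, lam⁻¹] : Matrix (Fin 2) (Fin 2) ℂ) 1 0 = 0 :=
    Matrix.diagonal_apply_ne _ (by decide)
  simp only [Matrix.trace_fin_two, Matrix.mul_apply, Fin.sum_univ_two, gP,
    Matrix.diagonal_apply_eq, hz1, hz2, Matrix.cons_val_zero,
    Matrix.cons_val_one, Matrix.head_cons, zero_mul, mul_zero, add_zero, zero_add]
  field_simp
  ring_nf
  linear_combination (-(lam ^ 2 - 1) ^ 2) * hdet
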